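/- arXiv:1110.4962 — 7 statements merged into one kernel-verified Lean document; each statement's English description precedes it below -/
import Mathlib

section
/- If (t_n)_{n=0}^∞ is a probability sequence satisfying Σ_{n=0}^∞ n·t_n < ∞, then the series Σ_{n=0}^∞ t_n ln t_n is convergent (equivalently, the sequence (t_n ln t_n)_{n=0}^∞ is summable, with the convention 0·ln 0 = 0). -/
/-- If `t` is a probability sequence with finite first moment
`Σ n·t_n < ∞`, then the entropy series `Σ t_n ln t_n` is convergent (summable);
the convention `0 · ln 0 = 0` holds automatically since `Real.log 0 = 0`. -/
theorem stmt2 (t : ℕ → ℝ) (ht0 : ∀ n, 0 ≤ t n) (ht1 : HasSum t 1)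
    (hmom : Summable (fun n : ℕ => (n : ℝ) * t n)) :
    Summable (fun n => t n * Real.log (t n)) := by
  have ht1' : ∀ n, t n ≤ 1 := fun n =>
    (Summable.le_tsum ht1.summable n fun i _ => ht0 i).trans_eq ht1.tsum_eq
  have hgeo : Summable (fun n : ℕ => 2 * Real.exp (-(1/2)) ^ n) := by
    apply Summable.mul_left
    exact summable_geometric_of_lt_one (Real.exp_nonneg _)
      (Real.exp_lt_one_iff.mpr (by norm_num))
  have key : ∀ n, |t n * Real.log (t n)| ≤ (n : ℝ) * t n + 2 * Real.exp (-(1/2)) ^ n := by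
    intro n
    rcases eq_or_lt_of_le (ht0 n) with h0 | h0
    · rw [← h0]
      simp only [mul_zero, zero_mul, Real.log_zero, abs_zero]
      positivity
    · have hle1 := ht1' n
      have hlog : Real.log (t n) ≤ 0 := Real.log_nonpos (le_of_lt h0) hle1
      have habs : |t n * Real.log (t n)| = t n * (-Real.log (t n)) := by
        rw [abs_mul, abs_of_nonneg (ht0 n), abs_of_nonpos hlog]
      rw [habs]
      by_cases hc : Real.exp (-(n : ℝ)) ≤ t n
      · have h1 : -Real.log (t n) ≤ (n : ℝ) := by
          have := Real.log_le_log (Real.exp_pos _) hc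
          rw [Real.log_exp] at this
          linarith
        have : t n * (-Real.log (t n)) ≤ (n : ℝ) * t n := by
          rw [mul_comm]
          exact mul_le_mul_of_nonneg_right h1 (ht0 n)
        have hpos : (0 : ℝ) ≤ 2 * Real.exp (-(1/2)) ^ n := by positivity
        linarith
      · push_neg at hc
        have hnn : (0 : ℝ) ≤ (n : ℝ) * t n := by positivity
        have hmain : t n * (-Real.log (t n)) ≤ 2 * Real.exp (-(1/2)) ^ n := by
          have hlog2 : -Real.log (t n) = Real.log (t n)⁻¹ := (Real.log_inv _).symm
          have hb : Real.log (t n)⁻¹ ≤ (t n)⁻¹ ^ ((1:ℝ)/2) / (1/2) :=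
            Real.log_le_rpow_div (by positivity) (by norm_num)
          have hhalf : t n ^ ((1:ℝ)/2) * t n ^ ((1:ℝ)/2) = t n := by
            rw [← Real.rpow_add h0]; norm_num
          have hspos : 0 < t n ^ ((1:ℝ)/2) := Real.rpow_pos_of_pos h0 _
          have hsq : t n * ((t n)⁻¹ ^ ((1:ℝ)/2) / (1/2)) = 2 * t n ^ ((1:ℝ)/2) := by
            rw [Real.inv_rpow (ht0 n)]
            field_simp
            nlinarith [hhalf]
          calc t n * (-Real.log (t n)) ≤ t n * ((t n)⁻¹ ^ ((1:ℝ)/2) / (1/2)) := by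
                rw [hlog2]
                exact mul_le_mul_of_nonneg_left hb (ht0 n)
            _ = 2 * t n ^ ((1:ℝ)/2) := hsq
            _ ≤ 2 * Real.exp (-(n : ℝ)) ^ ((1:ℝ)/2) := by
                have := Real.rpow_le_rpow (ht0 n) hc.le (by norm_num : (0:ℝ) ≤ 1/2)
                linarith
            _ = 2 * Real.exp (-(1/2)) ^ n := by
                rw [← Real.exp_mul, show -(n : ℝ) * (1/2) = (n : ℕ) * (-(1/2)) by ring,
                  Real.exp_nat_mul]
        linarith
  exact (Summable.of_nonneg_of_le (fun n => abs_nonneg _) key (hmom.add hgeo)).of_abs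
end

section
/- Define t_n = 6/(π²·n²) for n ≥ 1 (and t_0 = 0). Then (t_n) is a probability sequence, the series Σ_{n=1}^∞ n·t_n = Σ_{n=1}^∞ 6/(π²·n) is divergent, yet the series Σ_{n=1}^∞ t_n ln t_n is convergent, with Σ_{n=1}^∞ t_n ln t_n = ln(6/π²) − (12/π²)·Σ_{n=1}^∞ (ln n)/n². In particular, the condition Σ n·t_n < ∞ is sufficient but not necessary for convergence of the entropy series Σ t_n ln t_n. -/
open Real

lemma log_summable : Summable (fun n : ℕ => Real.log n / (n : ℝ) ^ 2) := by
  have hs : Summable (fun n : ℕ => 2 * (1 / (n : ℝ) ^ ((3:ℝ)/2))) :=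
    (Real.summable_one_div_nat_rpow.mpr (by norm_num)).mul_left 2
  refine hs.of_nonneg_of_le (fun n => ?_) (fun n => ?_)
  · rcases Nat.eq_zero_or_pos n with h | h
    · simp [h]
    · have h1 : (1:ℝ) ≤ n := by exact_mod_cast h
      positivity
  · rcases Nat.eq_zero_or_pos n with h | h
    · simp [h]
    · have h1 : (1:ℝ) ≤ n := by exact_mod_cast h
      have hn0 : (0:ℝ) < n := by linarith
      have hlog : Real.log n ≤ 2 * (n:ℝ) ^ ((1:ℝ)/2) := by
        have := Real.log_le_sub_one_of_pos (x := (n:ℝ) ^ ((1:ℝ)/2)) (by positivity)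
        have h2 : Real.log ((n:ℝ) ^ ((1:ℝ)/2)) = (1/2) * Real.log n :=
          Real.log_rpow hn0 _
        nlinarith [Real.rpow_nonneg hn0.le ((1:ℝ)/2)]
      rw [mul_one_div, div_le_div_iff₀ (by positivity) (by positivity)]
      have key : (n:ℝ) ^ ((1:ℝ)/2) * (n:ℝ) ^ ((3:ℝ)/2) = (n:ℝ) ^ 2 := by
        rw [← Real.rpow_add hn0]
        norm_num
      calc Real.log n * (n:ℝ) ^ ((3:ℝ)/2) ≤ (2 * (n:ℝ) ^ ((1:ℝ)/2)) * (n:ℝ) ^ ((3:ℝ)/2) := by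
            apply mul_le_mul_of_nonneg_right hlog (by positivity)
        _ = 2 * (n:ℝ) ^ 2 := by rw [mul_assoc, key]

/-- With `t_n = 6/(π²·n²)` for `n ≥ 1` and `t_0 = 0`, the sequence `t` is a
probability sequence, the first-moment series `Σ n·t_n` diverges, yet the entropy series
`Σ t_n ln t_n` converges, with sum `ln(6/π²) − (12/π²)·Σ (ln n)/n²`.  (The terms for
`n = 0` of the series on the right vanish, so full `tsum`s over `ℕ` are used.) -/
theorem stmt3 (t : ℕ → ℝ)
    (ht : ∀ n : ℕ, t n = if n = 0 then 0 else 6 / (Real.pi ^ 2 * (n : ℝ) ^ 2)) :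
    (∀ n, 0 ≤ t n) ∧ HasSum t 1 ∧
    ¬ Summable (fun n : ℕ => (n : ℝ) * t n) ∧
    Summable (fun n => t n * Real.log (t n)) ∧
    ∑' n, t n * Real.log (t n)
      = Real.log (6 / Real.pi ^ 2)
        - (12 / Real.pi ^ 2) * ∑' n : ℕ, Real.log n / (n : ℝ) ^ 2 := by
  have hπ : (0:ℝ) < Real.pi ^ 2 := by positivity
  have hteq : ∀ n : ℕ, t n = (6 / Real.pi ^ 2) * (1 / (n : ℝ) ^ 2) := by
    intro n
    rcases Nat.eq_zero_or_pos n with h | h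
    · simp [ht, h]
    · have hn0 : ((n:ℝ)) ≠ 0 := by positivity
      rw [ht]
      simp only [Nat.pos_iff_ne_zero.mp h, if_neg (Nat.pos_iff_ne_zero.mp h), ↓reduceIte]
      field_simp
  have hnonneg : ∀ n, 0 ≤ t n := by
    intro n; rw [hteq n]; positivity
  have hsum : HasSum t 1 := by
    have := hasSum_zeta_two.mul_left (6 / Real.pi ^ 2)
    have heq : (6 / Real.pi ^ 2) * (Real.pi ^ 2 / 6) = 1 := by field_simp
    rw [heq] at this
    have heq2 : t = fun n : ℕ => (6 / Real.pi ^ 2) * (1 / (n : ℝ) ^ 2) := by ext n; exact hteq n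
    rw [heq2]
    exact this
  have hnotsum : ¬ Summable (fun n : ℕ => (n : ℝ) * t n) := by
    intro h
    have h2 := h.mul_left (Real.pi ^ 2 / 6)
    apply Real.not_summable_one_div_natCast
    convert h2 using 1
    · rfl
    funext n
    rcases Nat.eq_zero_or_pos n with hn | hn
    · simp [hn, ht]
    · have hn0 : ((n:ℝ)) ≠ 0 := by positivity
      rw [ht, if_neg (Nat.pos_iff_ne_zero.mp hn)]
      field_simp
  have hid : ∀ n : ℕ, t n * Real.log (t n)
      = Real.log (6 / Real.pi ^ 2) * t n - (12 / Real.pi ^ 2) * (Real.log n / (n : ℝ) ^ 2) := by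
    intro n
    rcases Nat.eq_zero_or_pos n with hn | hn
    · simp [hn, ht]
    · have hn0 : (0:ℝ) < n := by exact_mod_cast hn
      have hlog : Real.log (t n) = Real.log (6 / Real.pi ^ 2) - 2 * Real.log n := by
        rw [hteq n, Real.log_mul (by positivity) (by positivity), Real.log_div one_ne_zero (by positivity),
          Real.log_one, Real.log_pow]
        push_cast; ring
      rw [hlog, hteq n]
      field_simp
      ring
  have hSummable : Summable (fun n => t n * Real.log (t n)) := by
    have h1 : Summable (fun n => Real.log (6 / Real.pi ^ 2) * t n) :=
      hsum.summable.mul_left _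
    have h2 : Summable (fun n : ℕ => (12 / Real.pi ^ 2) * (Real.log n / (n : ℝ) ^ 2)) :=
      log_summable.mul_left _
    exact (h1.sub h2).congr (fun n => (hid n).symm)
  refine ⟨hnonneg, hsum, hnotsum, hSummable, ?_⟩
  have h1 : Summable (fun n => Real.log (6 / Real.pi ^ 2) * t n) := hsum.summable.mul_left _
  have h2 : Summable (fun n : ℕ => (12 / Real.pi ^ 2) * (Real.log n / (n : ℝ) ^ 2)) :=
    log_summable.mul_left _
  calc ∑' n, t n * Real.log (t n)
      = ∑' n, (Real.log (6 / Real.pi ^ 2) * t n - (12 / Real.pi ^ 2) * (Real.log n / (n : ℝ) ^ 2)) := by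
        exact tsum_congr hid
    _ = (∑' n, Real.log (6 / Real.pi ^ 2) * t n) - ∑' n : ℕ, (12 / Real.pi ^ 2) * (Real.log n / (n : ℝ) ^ 2) :=
        Summable.tsum_sub h1 h2
    _ = Real.log (6 / Real.pi ^ 2) - (12 / Real.pi ^ 2) * ∑' n : ℕ, Real.log n / (n : ℝ) ^ 2 := by
        rw [tsum_mul_left, tsum_mul_left, hsum.tsum_eq, mul_one]
end

section
/- Let r ∈ (0,1). Then −ln(1−r) equals the maximum over all probability sequences (t_n) of limsup_{N→∞} Σ_{n=0}^N (n·t_n·ln r − t_n ln t_n), and this maximum is attained at the geometric distribution t_n = (1−r)·r^n, for which moreover Σ_{n=0}^∞ n·t_n = r/(1−r) < ∞ and the partial sums Σ_{n=0}^N (n·t_n·ln r − t_n ln t_n) converge to −ln(1−r). -/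
open Filter Real

private lemma limsup_le_of_le_tendsto' {u v : ℕ → ℝ} {L : ℝ} (hL : 0 ≤ L)
    (h : ∀ n, u n ≤ v n) (hv : Tendsto v atTop (nhds L)) :
    Filter.limsup u Filter.atTop ≤ L := by
  rw [Filter.limsup_eq]
  by_cases hB : BddBelow {a : ℝ | ∀ᶠ n in atTop, u n ≤ a}
  · refine le_of_forall_pos_le_add ?_
    intro ε hε
    refine csInf_le hB ?_
    have hev : ∀ᶠ n in atTop, v n < L + ε := hv.eventually_lt_const (by linarith)
    filter_upwards [hev] with n hn
    exact le_of_lt (lt_of_le_of_lt (h n) hn)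
  · rw [Real.sInf_of_not_bddBelow hB]
    exact hL

/-- For `r ∈ (0,1)`, `−ln(1−r)` is the maximum over all probability sequences
`t` of `limsup_N Σ_{n=0}^N (n t_n ln r − t_n ln t_n)`, attained at the geometric
distribution `t_n = (1−r) rⁿ`; moreover for the geometric distribution
`Σ n t_n = r/(1−r)` (finite) and the partial sums converge to `−ln(1−r)`. -/
theorem stmt6 (r : ℝ) (hr : r ∈ Set.Ioo (0 : ℝ) 1) :
    IsGreatest
      {x : ℝ | ∃ t : ℕ → ℝ, (∀ n, 0 ≤ t n) ∧ HasSum t 1 ∧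
        x = Filter.limsup
          (fun N => ∑ n ∈ Finset.range (N + 1),
            ((n : ℝ) * t n * Real.log r - t n * Real.log (t n))) Filter.atTop}
      (-Real.log (1 - r)) ∧
    (∀ n, 0 ≤ (1 - r) * r ^ n) ∧
    HasSum (fun n : ℕ => (1 - r) * r ^ n) 1 ∧
    HasSum (fun n : ℕ => (n : ℝ) * ((1 - r) * r ^ n)) (r / (1 - r)) ∧
    Filter.Tendsto
      (fun N => ∑ n ∈ Finset.range (N + 1),
        ((n : ℝ) * ((1 - r) * r ^ n) * Real.log r
          - ((1 - r) * r ^ n) * Real.log ((1 - r) * r ^ n)))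
      Filter.atTop (nhds (-Real.log (1 - r))) := by
  obtain ⟨hr0, hr1⟩ := hr
  have h1r : 0 < 1 - r := by linarith
  set q : ℕ → ℝ := fun n => (1 - r) * r ^ n with hq_def
  have hq_pos : ∀ n, 0 < q n := fun n => mul_pos h1r (pow_pos hr0 n)
  have hq_nonneg : ∀ n, 0 ≤ q n := fun n => (hq_pos n).le
  -- sum of geometric is 1
  have hq_sum : HasSum q 1 := by
    have := (hasSum_geometric_of_lt_one hr0.le hr1).mul_left (1 - r)
    simpa [mul_inv_cancel₀ h1r.ne'] using this
  -- log of q n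
  have hlogq : ∀ n, Real.log (q n) = Real.log (1 - r) + n * Real.log r := by
    intro n
    rw [hq_def]
    rw [Real.log_mul h1r.ne' (pow_pos hr0 n).ne', Real.log_pow]
  -- the geometric term simplifies
  have hterm : ∀ n : ℕ, (n : ℝ) * q n * Real.log r - q n * Real.log (q n)
      = -Real.log (1 - r) * q n := by
    intro n; rw [hlogq n]; ring
  -- partial sums of geometric terms converge
  have htendsto : Filter.Tendsto
      (fun N => ∑ n ∈ Finset.range (N + 1),
        ((n : ℝ) * q n * Real.log r - q n * Real.log (q n)))
      Filter.atTop (nhds (-Real.log (1 - r))) := by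
    have h1 : HasSum (fun n => -Real.log (1 - r) * q n) (-Real.log (1 - r) * 1) :=
      hq_sum.mul_left _
    have h2 := h1.tendsto_sum_nat.comp (tendsto_add_atTop_nat 1)
    simp only [mul_one] at h2
    refine Filter.Tendsto.congr ?_ h2
    intro N
    simp only [Function.comp]
    exact Finset.sum_congr rfl (fun n _ => (hterm n).symm)
  refine ⟨⟨⟨q, hq_nonneg, hq_sum, (htendsto.limsup_eq).symm⟩, ?_⟩, hq_nonneg, hq_sum, ?_, htendsto⟩
  · -- upper bound
    rintro x ⟨t, ht0, ht_sum, rfl⟩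
    set v : ℕ → ℝ := fun N => 1 - (∑ n ∈ Finset.range (N + 1), t n)
      - Real.log (1 - r) * (∑ n ∈ Finset.range (N + 1), t n) with hv_def
    have hL : 0 ≤ -Real.log (1 - r) := by
      rw [neg_nonneg]
      exact Real.log_nonpos h1r.le (by linarith)
    refine limsup_le_of_le_tendsto' (v := v) hL ?_ ?_
    · intro N
      have key : ∀ n : ℕ, (n : ℝ) * t n * Real.log r - t n * Real.log (t n)
          ≤ q n - t n - t n * Real.log (1 - r) := by
        intro n
        rcases eq_or_lt_of_le (ht0 n) with h0 | htpos
        · simp [← h0, hq_nonneg n]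
        · have hdiv : 0 < q n / t n := div_pos (hq_pos n) htpos
          have h2 : Real.log (q n / t n) ≤ q n / t n - 1 :=
            Real.log_le_sub_one_of_pos hdiv
          have h3 : t n * (q n / t n - 1) = q n - t n := by
            field_simp
          have h4 : t n * Real.log (q n / t n) ≤ q n - t n := by
            calc t n * Real.log (q n / t n) ≤ t n * (q n / t n - 1) :=
                  mul_le_mul_of_nonneg_left h2 htpos.le
              _ = q n - t n := h3
          have h1 : Real.log (q n / t n)
              = Real.log (1 - r) + n * Real.log r - Real.log (t n) := by
            rw [Real.log_div (hq_pos n).ne' htpos.ne', hlogq n]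
          rw [h1] at h4
          nlinarith [h4]
      calc (∑ n ∈ Finset.range (N + 1),
            ((n : ℝ) * t n * Real.log r - t n * Real.log (t n)))
          ≤ ∑ n ∈ Finset.range (N + 1), (q n - t n - t n * Real.log (1 - r)) :=
            Finset.sum_le_sum (fun n _ => key n)
        _ = (∑ n ∈ Finset.range (N + 1), q n) - (∑ n ∈ Finset.range (N + 1), t n)
            - Real.log (1 - r) * (∑ n ∈ Finset.range (N + 1), t n) := by
            rw [Finset.sum_sub_distrib, Finset.sum_sub_distrib, Finset.mul_sum]
            congr 1
            exact Finset.sum_congr rfl (fun n _ => by ring)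
        _ ≤ v N := by
            have hle : (∑ n ∈ Finset.range (N + 1), q n) ≤ 1 :=
              sum_le_hasSum _ (fun n _ => hq_nonneg n) hq_sum
            rw [hv_def]; dsimp only; linarith
    · have hT : Filter.Tendsto (fun N => ∑ n ∈ Finset.range (N + 1), t n)
          Filter.atTop (nhds 1) := by
        have := ht_sum.tendsto_sum_nat.comp (tendsto_add_atTop_nat 1)
        exact this
      have : Filter.Tendsto v Filter.atTop
          (nhds (1 - 1 - Real.log (1 - r) * 1)) :=
        ((tendsto_const_nhds.sub hT).sub (hT.const_mul _))
      simpa using this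
  · -- HasSum n * q n = r / (1-r)
    have habs : |r| < 1 := by rw [abs_of_pos hr0]; exact hr1
    have h1 : HasSum (fun n : ℕ => (n : ℝ) * r ^ n) (r / (1 - r) ^ 2) := by
      have := hasSum_coe_mul_geometric_of_norm_lt_one (𝕜 := ℝ) (r := r)
        (by rwa [Real.norm_eq_abs])
      exact this
    have h2 := h1.mul_left (1 - r)
    have heq : (1 - r) * (r / (1 - r) ^ 2) = r / (1 - r) := by
      field_simp
    rw [heq] at h2
    have hfun : (fun n : ℕ => (n : ℝ) * ((1 - r) * r ^ n))
        = fun n : ℕ => (1 - r) * ((n : ℝ) * r ^ n) := by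
      funext n; ring
    rw [hfun]
    exact h2
end

section
/- Let (c_n) be a bounded real sequence and r ∈ (0,1). Then ln(Σ_{n=0}^∞ e^{c_n} r^n) equals the maximum, over all probability sequences (t_n) with Σ_{n=0}^∞ n·t_n < ∞, of Σ_{n=0}^∞ c_n·t_n + (ln r)·Σ_{n=0}^∞ n·t_n − Σ_{n=0}^∞ t_n ln t_n (all three series being convergent for such (t_n)). The maximum is attained at t_n = e^{c_n} r^n / f_c(r), where f_c(r) = Σ_{m=0}^∞ e^{c_m} r^m. -/
/-- Gibbs-type inequality: `t log s - t log t ≤ s - t` for `t ≥ 0`, `s > 0`. -/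
lemma gibbs_aux {t s : ℝ} (ht : 0 ≤ t) (hs : 0 < s) :
    t * Real.log s - t * Real.log t ≤ s - t := by
  rcases eq_or_lt_of_le ht with h | h
  · simp [← h, hs.le]
  · have h1 := Real.log_le_sub_one_of_pos (div_pos hs h)
    rw [Real.log_div hs.ne' h.ne'] at h1
    have h2 : t * (Real.log s - Real.log t) ≤ t * (s / t - 1) :=
      mul_le_mul_of_nonneg_left h1 h.le
    have h3 : t * (s / t - 1) = s - t := by field_simp
    nlinarith [h2, h3]

/-- For a bounded real sequence `c` and `r ∈ (0,1)`: for every probability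
sequence `t` with finite first moment, the series `Σ c_n t_n`, `Σ n t_n`, `Σ t_n ln t_n`
all converge and `Σ c_n t_n + (ln r)·Σ n t_n − Σ t_n ln t_n ≤ ln f_c(r)` where
`f_c(r) = Σ e^{c_n} rⁿ`; and the maximum is attained at `t_n = e^{c_n} rⁿ / f_c(r)`. -/
theorem stmt9 (c : ℕ → ℝ) (hc : ∃ M, ∀ n, |c n| ≤ M)
    (r : ℝ) (hr : r ∈ Set.Ioo (0 : ℝ) 1)
    (F : ℝ) (hF : F = ∑' m : ℕ, Real.exp (c m) * r ^ m) :
    (∀ t : ℕ → ℝ, (∀ n, 0 ≤ t n) → HasSum t 1 →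
      Summable (fun n : ℕ => (n : ℝ) * t n) →
      Summable (fun n => c n * t n) ∧
      Summable (fun n => t n * Real.log (t n)) ∧
      ∑' n, c n * t n + Real.log r * ∑' n : ℕ, (n : ℝ) * t n
          - ∑' n, t n * Real.log (t n) ≤ Real.log F) ∧
    ((∀ n : ℕ, 0 ≤ Real.exp (c n) * r ^ n / F) ∧
      HasSum (fun n : ℕ => Real.exp (c n) * r ^ n / F) 1 ∧
      Summable (fun n : ℕ => (n : ℝ) * (Real.exp (c n) * r ^ n / F)) ∧
      ∑' n : ℕ, c n * (Real.exp (c n) * r ^ n / F)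
          + Real.log r * ∑' n : ℕ, (n : ℝ) * (Real.exp (c n) * r ^ n / F)
          - ∑' n : ℕ, (Real.exp (c n) * r ^ n / F)
              * Real.log (Real.exp (c n) * r ^ n / F)
        = Real.log F) := by
  obtain ⟨M, hM⟩ := hc
  obtain ⟨hr0, hr1⟩ := hr
  -- summability of e^{c n} r^n
  have hgeo : Summable (fun n : ℕ => r ^ n) := summable_geometric_of_lt_one hr0.le hr1
  have hsumE : Summable (fun n : ℕ => Real.exp (c n) * r ^ n) := by
    refine Summable.of_nonneg_of_le (fun n => by positivity) (fun n => ?_)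
      (hgeo.mul_left (Real.exp M))
    exact mul_le_mul_of_nonneg_right
      (Real.exp_le_exp.2 ((abs_le.1 (hM n)).2)) (by positivity)
  have hFpos : 0 < F := by
    rw [hF]; exact Summable.tsum_pos hsumE (fun n => by positivity) 0 (by positivity)
  set p : ℕ → ℝ := fun n => Real.exp (c n) * r ^ n / F with hp
  have hppos : ∀ n, 0 < p n := fun n => div_pos (by positivity) hFpos
  have hpsum : HasSum p 1 := by
    have := hsumE.hasSum.div_const F
    rwa [← hF, div_self hFpos.ne'] at this
  have hlogp : ∀ n, Real.log (p n) = c n + (n : ℝ) * Real.log r - Real.log F := by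
    intro n
    rw [hp]
    rw [Real.log_div (by positivity) hFpos.ne', Real.log_mul (Real.exp_ne_zero _)
      (by positivity), Real.log_exp, Real.log_pow]
  have hnp : Summable (fun n : ℕ => (n : ℝ) * p n) := by
    refine Summable.of_nonneg_of_le (fun n => by positivity) (fun n => ?_)
      (((summable_pow_mul_geometric_of_norm_lt_one 1
        (by rw [Real.norm_eq_abs, abs_of_pos hr0]; exact hr1)).mul_left
        (Real.exp M / F)))
    have h1 : p n ≤ Real.exp M * r ^ n / F := by
      show Real.exp (c n) * r ^ n / F ≤ _
      exact (div_le_div_iff_of_pos_right hFpos).2 (mul_le_mul_of_nonneg_right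
        (Real.exp_le_exp.2 ((abs_le.1 (hM n)).2)) (by positivity))
    calc (n : ℝ) * p n ≤ (n : ℝ) * (Real.exp M * r ^ n / F) :=
          mul_le_mul_of_nonneg_left h1 (Nat.cast_nonneg n)
      _ = Real.exp M / F * ((n : ℝ) ^ 1 * r ^ n) := by ring
  have hM0 : 0 ≤ M := (abs_nonneg (c 0)).trans (hM 0)
  -- Part 1
  have part1 : ∀ t : ℕ → ℝ, (∀ n, 0 ≤ t n) → HasSum t 1 →
      Summable (fun n : ℕ => (n : ℝ) * t n) →
      Summable (fun n => c n * t n) ∧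
      Summable (fun n => t n * Real.log (t n)) ∧
      ∑' n, c n * t n + Real.log r * ∑' n : ℕ, (n : ℝ) * t n
          - ∑' n, t n * Real.log (t n) ≤ Real.log F := by
    intro t ht hts hnt
    have htsum : Summable t := hts.summable
    have ht1 : ∀ n, t n ≤ 1 := fun n =>
      le_hasSum hts n (fun j _ => ht j)
    have hct : Summable (fun n => c n * t n) := by
      refine Summable.of_abs (Summable.of_nonneg_of_le (fun n => abs_nonneg _)
        (fun n => ?_) (htsum.mul_left M))
      rw [abs_mul, abs_of_nonneg (ht n)]
      exact mul_le_mul_of_nonneg_right (hM n) (ht n)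
    have hent : Summable (fun n => t n * Real.log (t n)) := by
      refine Summable.of_abs (Summable.of_nonneg_of_le (fun n => abs_nonneg _)
        (fun n => ?_) ((hnt.mul_left (Real.log 2)).add
          (summable_geometric_of_lt_one (by norm_num) (by norm_num : (1:ℝ)/2 < 1))))
      have hle0 : t n * Real.log (t n) ≤ 0 :=
        mul_nonpos_iff.2 (Or.inl ⟨ht n, Real.log_nonpos (ht n) (ht1 n)⟩)
      rw [abs_of_nonpos hle0]
      -- use gibbs with s = (1/2)^n
      have hs : (0:ℝ) < (1/2 : ℝ) ^ n := by positivity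
      have := gibbs_aux (ht n) hs
      have hlog : Real.log ((1/2 : ℝ) ^ n) = -((n : ℝ) * Real.log 2) := by
        rw [Real.log_pow, one_div, Real.log_inv]; ring
      rw [hlog] at this
      nlinarith [ht n, this]
    refine ⟨hct, hent, ?_⟩
    -- key termwise inequality
    have key : ∀ n, c n * t n + Real.log r * ((n : ℝ) * t n) - t n * Real.log (t n)
        ≤ (p n - t n) + Real.log F * t n := by
      intro n
      have hg := gibbs_aux (ht n) (hppos n)
      rw [hlogp n] at hg
      nlinarith [hg]
    have hLsum : Summable (fun n => c n * t n + Real.log r * ((n : ℝ) * t n)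
        - t n * Real.log (t n)) :=
      (hct.add (hnt.mul_left _)).sub hent
    have hRsum : Summable (fun n => (p n - t n) + Real.log F * t n) :=
      ((hpsum.summable.sub htsum).add (htsum.mul_left _))
    have hle := Summable.tsum_le_tsum key hLsum hRsum
    have hL : ∑' n, (c n * t n + Real.log r * ((n : ℝ) * t n) - t n * Real.log (t n))
        = ∑' n, c n * t n + Real.log r * ∑' n : ℕ, (n : ℝ) * t n
          - ∑' n, t n * Real.log (t n) := by
      rw [Summable.tsum_sub (hct.add (hnt.mul_left _)) hent, Summable.tsum_add hct (hnt.mul_left _),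
        tsum_mul_left]
    have hR : ∑' n, ((p n - t n) + Real.log F * t n) = Real.log F := by
      rw [Summable.tsum_add (hpsum.summable.sub htsum) (htsum.mul_left _),
        Summable.tsum_sub hpsum.summable htsum, tsum_mul_left, hpsum.tsum_eq, hts.tsum_eq]
      ring
    rw [hL, hR] at hle
    exact hle
  refine ⟨part1, fun n => (hppos n).le, hpsum, hnp, ?_⟩
  obtain ⟨hcp, hplogp, _⟩ := part1 p (fun n => (hppos n).le) hpsum hnp
  have hterm : ∀ n, c n * p n + Real.log r * ((n : ℝ) * p n) - p n * Real.log (p n)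
      = Real.log F * p n := by
    intro n; rw [hlogp n]; ring
  have hcomb : ∑' n, (c n * p n + Real.log r * ((n : ℝ) * p n) - p n * Real.log (p n))
      = Real.log F := by
    calc ∑' n, (c n * p n + Real.log r * ((n : ℝ) * p n) - p n * Real.log (p n))
        = ∑' n, Real.log F * p n := by exact tsum_congr hterm
      _ = Real.log F * 1 := by rw [tsum_mul_left, hpsum.tsum_eq]
      _ = Real.log F := mul_one _
  rw [← hcomb]
  rw [Summable.tsum_sub (hcp.add (hnp.mul_left _)) hplogp, Summable.tsum_add hcp (hnp.mul_left _),
    tsum_mul_left]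
end

section
/- Let D = {(t, a) ∈ l¹ × ℝ : t is a probability sequence, Σ_{n=0}^∞ n·t_n < ∞, and a = Σ_{n=0}^∞ n·t_n}. Then D is a convex subset of l¹ × ℝ, and the function (t, a) ↦ Σ_{n=0}^∞ t_n ln t_n (which is well-defined and finite on D) is convex on D. -/
open Real

lemma ent_bound (n : ℕ) (t : ℝ) (h0 : 0 ≤ t) (h1 : t ≤ 1) :
    |t * Real.log t| ≤ n * t + 2 * Real.exp (-2⁻¹ : ℝ) ^ n := by
  have hrhs0 : 0 ≤ (n : ℝ) * t + 2 * Real.exp (-2⁻¹ : ℝ) ^ n := by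
    have := (Real.exp_pos (-2⁻¹ : ℝ)).le
    positivity
  rcases h0.eq_or_lt with h | ht
  · rw [← h]
    simp only [Real.log_zero, mul_zero, abs_zero, zero_mul]
    positivity
  have hlog : Real.log t ≤ 0 := Real.log_nonpos h0 h1
  have habs : |t * Real.log t| = t * (-Real.log t) := by
    rw [abs_of_nonpos (mul_nonpos_of_nonneg_of_nonpos h0 hlog)]; ring
  rw [habs]
  rcases le_or_gt (-Real.log t) n with h | h
  · have : t * (-Real.log t) ≤ t * n := by
      apply mul_le_mul_of_nonneg_left h h0
    calc t * (-Real.log t) ≤ t * n := this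
      _ ≤ n * t + 2 * Real.exp (-2⁻¹ : ℝ) ^ n := by
          have := (Real.exp_pos (-2⁻¹ : ℝ)).le
          nlinarith [pow_nonneg this n]
  · -- t < exp(-n); use -t log t ≤ 2 √t
    have hbound : t * (-Real.log t) ≤ 2 * Real.sqrt t := by
      have hinv : (0:ℝ) < t⁻¹ := inv_pos.mpr ht
      have h2 : -Real.log t = Real.log t⁻¹ := (Real.log_inv t).symm
      have h3 : Real.log t⁻¹ = 2 * Real.log (Real.sqrt t⁻¹) := by
        rw [Real.log_sqrt hinv.le]; ring
      have h4 : Real.log (Real.sqrt t⁻¹) ≤ Real.sqrt t⁻¹ := by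
        have := Real.log_le_sub_one_of_pos (Real.sqrt_pos.mpr hinv)
        linarith
      have h5 : t * Real.sqrt t⁻¹ = Real.sqrt t := by
        rw [Real.sqrt_inv]
        field_simp
        rw [Real.sq_sqrt h0]
      calc t * (-Real.log t) = t * (2 * Real.log (Real.sqrt t⁻¹)) := by rw [h2, h3]
        _ ≤ t * (2 * Real.sqrt t⁻¹) := by
            apply mul_le_mul_of_nonneg_left (by linarith) h0
        _ = 2 * (t * Real.sqrt t⁻¹) := by ring
        _ = 2 * Real.sqrt t := by rw [h5]
    have hlt : t < Real.exp (-(n:ℝ)) := by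
      have : Real.log t < -(n:ℝ) := by linarith
      calc t = Real.exp (Real.log t) := (Real.exp_log ht).symm
        _ < Real.exp (-(n:ℝ)) := Real.exp_lt_exp.mpr this
    have hsq : Real.sqrt t ≤ Real.exp (-2⁻¹ : ℝ) ^ n := by
      have he : Real.exp (-(n:ℝ)) = (Real.exp (-2⁻¹ : ℝ) ^ n) ^ 2 := by
        rw [← pow_mul, ← Real.exp_nat_mul]
        congr 1
        push_cast; ring
      calc Real.sqrt t ≤ Real.sqrt (Real.exp (-(n:ℝ))) := Real.sqrt_le_sqrt hlt.le
        _ = Real.exp (-2⁻¹ : ℝ) ^ n := by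
            rw [he, Real.sqrt_sq (by positivity)]
    calc t * (-Real.log t) ≤ 2 * Real.sqrt t := hbound
      _ ≤ 2 * Real.exp (-2⁻¹ : ℝ) ^ n := by linarith
      _ ≤ n * t + 2 * Real.exp (-2⁻¹ : ℝ) ^ n := by nlinarith [mul_nonneg (Nat.cast_nonneg (α := ℝ) n) h0]

lemma lp_summable' (f : lp (fun _ : ℕ => ℝ) 1) (h0 : ∀ n, 0 ≤ f n) :
    Summable (fun n => f n) := by
  have := lp.memℓp f
  rw [memℓp_gen_iff (by norm_num : (0:ℝ) < ENNReal.toReal 1)] at this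
  simp only [ENNReal.toReal_one, Real.rpow_one, Real.norm_eq_abs] at this
  exact this.congr (fun n => abs_of_nonneg (h0 n))

lemma ent_summable (f : ℕ → ℝ) (h0 : ∀ n, 0 ≤ f n) (h1 : ∀ n, f n ≤ 1)
    (hs : Summable fun n : ℕ => (n:ℝ) * f n) :
    Summable (fun n => f n * Real.log (f n)) := by
  apply Summable.of_abs
  apply Summable.of_nonneg_of_le (fun n => abs_nonneg _)
    (fun n => ent_bound n (f n) (h0 n) (h1 n))
  apply hs.add
  apply Summable.mul_left
  exact summable_geometric_of_lt_one (Real.exp_pos _).le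
    (Real.exp_lt_one_iff.mpr (by norm_num))

lemma comb_apply (a b : ℝ) (x y : lp (fun _ : ℕ => ℝ) 1) (n : ℕ) :
    (a • x + b • y) n = a * x n + b * y n := by
  simp [lp.coeFn_add, lp.coeFn_smul]
  rfl

/-- The set `D = {(t,a) ∈ l¹ × ℝ : t is a probability sequence,
Σ n t_n < ∞ and a = Σ n t_n}` is convex, and the entropy function
`(t,a) ↦ Σ t_n ln t_n` is convex on `D`. -/
theorem stmt12
    (D : Set (lp (fun _ : ℕ => ℝ) 1 × ℝ))
    (hD : D = {p | (∀ n, 0 ≤ p.1 n) ∧ (∑' n, p.1 n) = 1 ∧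
      Summable (fun n : ℕ => (n : ℝ) * p.1 n) ∧ p.2 = ∑' n : ℕ, (n : ℝ) * p.1 n}) :
    Convex ℝ D ∧
    ConvexOn ℝ D (fun p => ∑' n, p.1 n * Real.log (p.1 n)) := by
  subst hD
  have hconv : Convex ℝ {p : lp (fun _ : ℕ => ℝ) 1 × ℝ | (∀ n, 0 ≤ p.1 n) ∧
      (∑' n, p.1 n) = 1 ∧ Summable (fun n : ℕ => (n : ℝ) * p.1 n) ∧
      p.2 = ∑' n : ℕ, (n : ℝ) * p.1 n} := by
    intro x hx y hy a b ha hb hab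
    obtain ⟨hx0, hx1, hxs, hxa⟩ := hx
    obtain ⟨hy0, hy1, hys, hya⟩ := hy
    have hfst : ∀ n, (a • x + b • y).1 n = a * x.1 n + b * y.1 n := by
      intro n
      have h : (a • x + b • y).1 = a • x.1 + b • y.1 := rfl
      rw [h, comb_apply]
    have hx1' : Summable fun n => x.1 n := lp_summable' x.1 hx0
    have hy1' : Summable fun n => y.1 n := lp_summable' y.1 hy0
    refine ⟨?_, ?_, ?_, ?_⟩
    · intro n
      rw [hfst n]
      exact add_nonneg (mul_nonneg ha (hx0 n)) (mul_nonneg hb (hy0 n))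
    · calc ∑' n, (a • x + b • y).1 n = ∑' n, (a * x.1 n + b * y.1 n) :=
            tsum_congr hfst
        _ = a * ∑' n, x.1 n + b * ∑' n, y.1 n := by
            rw [Summable.tsum_add (hx1'.mul_left a) (hy1'.mul_left b), tsum_mul_left,
              tsum_mul_left]
        _ = 1 := by rw [hx1, hy1]; linarith
    · have h : ∀ n : ℕ, a * ((n:ℝ) * x.1 n) + b * ((n:ℝ) * y.1 n)
          = (n:ℝ) * ((a • x + b • y).1 n) := by
        intro n; rw [hfst n]; ring
      exact ((hxs.mul_left a).add (hys.mul_left b)).congr h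
    · have h2 : (a • x + b • y).2 = a * x.2 + b * y.2 := rfl
      rw [h2, hxa, hya, ← tsum_mul_left, ← tsum_mul_left,
        ← Summable.tsum_add (hxs.mul_left a) (hys.mul_left b)]
      exact tsum_congr fun n => by rw [hfst n]; ring
  refine ⟨hconv, hconv, ?_⟩
  intro x hx y hy a b ha hb hab
  have hz := hconv hx hy ha hb hab
  obtain ⟨hx0, hx1, hxs, _⟩ := hx
  obtain ⟨hy0, hy1, hys, _⟩ := hy
  obtain ⟨hz0, hz1, hzs, _⟩ := hz
  have hfst : ∀ n, (a • x + b • y).1 n = a * x.1 n + b * y.1 n := by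
    intro n
    have h : (a • x + b • y).1 = a • x.1 + b • y.1 := rfl
    rw [h, comb_apply]
  have hxle : ∀ n, x.1 n ≤ 1 := fun n =>
    (Summable.le_tsum (lp_summable' x.1 hx0) n (fun m _ => hx0 m)).trans_eq hx1
  have hyle : ∀ n, y.1 n ≤ 1 := fun n =>
    (Summable.le_tsum (lp_summable' y.1 hy0) n (fun m _ => hy0 m)).trans_eq hy1
  have hzle : ∀ n, (a • x + b • y).1 n ≤ 1 := fun n =>
    (Summable.le_tsum (lp_summable' _ hz0) n (fun m _ => hz0 m)).trans_eq hz1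
  have sx : Summable fun n => x.1 n * Real.log (x.1 n) :=
    ent_summable _ hx0 hxle hxs
  have sy : Summable fun n => y.1 n * Real.log (y.1 n) :=
    ent_summable _ hy0 hyle hys
  have sz : Summable fun n => (a • x + b • y).1 n * Real.log ((a • x + b • y).1 n) :=
    ent_summable _ hz0 hzle hzs
  simp only [smul_eq_mul]
  calc ∑' n, (a • x + b • y).1 n * Real.log ((a • x + b • y).1 n)
      ≤ ∑' n, (a * (x.1 n * Real.log (x.1 n)) + b * (y.1 n * Real.log (y.1 n))) := by
        refine Summable.tsum_le_tsum (fun n => ?_) sz ((sx.mul_left a).add (sy.mul_left b))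
        rw [hfst n]
        have := Real.convexOn_mul_log.2 (Set.mem_Ici.mpr (hx0 n))
          (Set.mem_Ici.mpr (hy0 n)) ha hb hab
        simpa [smul_eq_mul] using this
    _ = a * ∑' n, x.1 n * Real.log (x.1 n) + b * ∑' n, y.1 n * Real.log (y.1 n) := by
        rw [Summable.tsum_add (sx.mul_left a) (sy.mul_left b), tsum_mul_left, tsum_mul_left]
end

section
/- Let E be a real vector space, C ⊆ E a convex set, and f : E → ℝ convex on C. Let e₀ = (1,0,0,…) ∈ l¹ and define D = {(t, μ) ∈ l¹ × E : t is a probability sequence with Σ n·t_n < ∞, t ≠ e₀, and μ/(Σ_{n=0}^∞ n·t_n) ∈ C}. Then D is a convex subset of l¹ × E, and the function (t, μ) ↦ (Σ_{n=0}^∞ n·t_n)·f(μ/(Σ_{n=0}^∞ n·t_n)) + Σ_{n=0}^∞ t_n ln t_n is convex on D. -/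
private lemma stmt14_bound (x : ℝ) (hx : 0 ≤ x) (n : ℕ) (hxe : x ≤ Real.exp (-(n : ℝ))) :
    -(x * Real.log x) ≤ (n : ℝ) * x + 2 * Real.exp (-(1/2)) ^ n := by
  have hnx : 0 ≤ (n : ℝ) * x := mul_nonneg (Nat.cast_nonneg n) hx
  rcases eq_or_lt_of_le hx with rfl | hx0
  · simpa using add_nonneg hnx (by positivity)
  · have hsx : 0 < Real.sqrt x := Real.sqrt_pos.2 hx0
    have h1 : -(x * Real.log x) ≤ 2 * Real.sqrt x := by
      have hlog : -Real.log x ≤ 2 / Real.sqrt x := by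
        have h2 : Real.log (Real.sqrt x) = Real.log x / 2 := Real.log_sqrt hx
        have h3 : Real.log (Real.sqrt x)⁻¹ ≤ (Real.sqrt x)⁻¹ - 1 :=
          Real.log_le_sub_one_of_pos (inv_pos.2 hsx)
        rw [Real.log_inv, h2] at h3
        rw [div_eq_mul_inv]
        linarith
      have := mul_le_mul_of_nonneg_left hlog hx
      calc -(x * Real.log x) = x * (-Real.log x) := by ring
        _ ≤ x * (2 / Real.sqrt x) := this
        _ = 2 * (x / Real.sqrt x) := by ring
        _ = 2 * Real.sqrt x := by rw [Real.div_sqrt]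
    have h5 : Real.sqrt x ≤ Real.exp (-(1/2)) ^ n := by
      have he : Real.exp (-(n : ℝ)) = (Real.exp (-(1/2)) ^ n) ^ 2 := by
        rw [← Real.exp_nat_mul, ← Real.exp_nat_mul]
        congr 1
        push_cast
        ring
      calc Real.sqrt x ≤ Real.sqrt (Real.exp (-(n : ℝ))) := Real.sqrt_le_sqrt hxe
        _ = Real.exp (-(1/2)) ^ n := by rw [he, Real.sqrt_sq (by positivity)]
    linarith

private lemma stmt14_entropy_summable {t : ℕ → ℝ} (h0 : ∀ n, 0 ≤ t n) (h1 : ∀ n, t n ≤ 1)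
    (hs : Summable fun n : ℕ => (n : ℝ) * t n) :
    Summable fun n => t n * Real.log (t n) := by
  have hgeo : Summable fun n : ℕ => 2 * Real.exp (-(1/2)) ^ n :=
    (summable_geometric_of_lt_one (Real.exp_pos _).le
      (Real.exp_lt_one_iff.2 (by norm_num))).mul_left 2
  have hb : Summable fun n : ℕ => (n : ℝ) * t n + 2 * Real.exp (-(1/2)) ^ n := hs.add hgeo
  have key : Summable fun n => -(t n * Real.log (t n)) := by
    refine Summable.of_nonneg_of_le (fun n => ?_) (fun n => ?_) hb
    · have := mul_nonpos_of_nonneg_of_nonpos (h0 n) (Real.log_nonpos (h0 n) (h1 n))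
      linarith
    · rcases le_or_gt (t n) (Real.exp (-(n : ℝ))) with h | h
      · exact stmt14_bound (t n) (h0 n) n h
      · have hx0 : 0 < t n := lt_trans (Real.exp_pos _) h
        have hlog : -(n : ℝ) ≤ Real.log (t n) := by
          have := Real.log_le_log (Real.exp_pos _) h.le
          rwa [Real.log_exp] at this
        have h2 : -(t n * Real.log (t n)) ≤ (n : ℝ) * t n := by nlinarith
        have : (0:ℝ) ≤ 2 * Real.exp (-(1/2)) ^ n := by positivity
        linarith
  simpa using key.neg

private lemma stmt14_S_pos {t : ℕ → ℝ} (h0 : ∀ n, 0 ≤ t n)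
    (hs : Summable fun n : ℕ => (n : ℝ) * t n) {m : ℕ} (hm : m ≠ 0) (hmp : 0 < t m) :
    0 < ∑' n : ℕ, (n : ℝ) * t n := by
  have hterm : 0 < (m : ℝ) * t m :=
    mul_pos (by exact_mod_cast Nat.pos_of_ne_zero hm) hmp
  exact lt_of_lt_of_le hterm (Summable.le_tsum hs m fun n _ => mul_nonneg (Nat.cast_nonneg n) (h0 n))

set_option maxHeartbeats 2000000 in
/-- Let `f` be convex on a convex set `C` in a real vector space `E`,
`e₀ = (1,0,0,…) ∈ l¹`, and
`D = {(t,μ) : t a probability sequence with Σ n t_n < ∞, t ≠ e₀, μ/(Σ n t_n) ∈ C}`.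
Then `D` is convex and `(t,μ) ↦ (Σ n t_n)·f(μ/(Σ n t_n)) + Σ t_n ln t_n` is convex on `D`. -/
theorem stmt14 {E : Type*} [AddCommGroup E] [Module ℝ E]
    (C : Set E) (f : E → ℝ) (hf : ConvexOn ℝ C f)
    (e₀ : ℕ → ℝ) (he₀ : ∀ n, e₀ n = if n = 0 then 1 else 0)
    (D : Set (lp (fun _ : ℕ => ℝ) 1 × E))
    (hD : D = {p | (∀ n, 0 ≤ p.1 n) ∧ (∑' n, p.1 n) = 1 ∧
      Summable (fun n : ℕ => (n : ℝ) * p.1 n) ∧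
      (fun n => p.1 n) ≠ e₀ ∧
      (∑' n : ℕ, (n : ℝ) * p.1 n)⁻¹ • p.2 ∈ C}) :
    Convex ℝ D ∧
    ConvexOn ℝ D (fun p =>
      (∑' n : ℕ, (n : ℝ) * p.1 n) * f ((∑' n : ℕ, (n : ℝ) * p.1 n)⁻¹ • p.2)
        + ∑' n, p.1 n * Real.log (p.1 n)) := by
  
  subst hD
  have he₀' : e₀ = fun n : ℕ => if n = 0 then (1:ℝ) else 0 := funext he₀
  subst he₀'
  have coord : ∀ (a b : ℝ) (p q : lp (fun _ : ℕ => ℝ) 1 × E) (n : ℕ),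
      (a • p + b • q).1 n = a * p.1 n + b * q.1 n := by
    intro a b p q n
    have h : (a • p + b • q).1 = a • p.1 + b • q.1 := rfl
    rw [h, lp.coeFn_add, Pi.add_apply, lp.coeFn_smul, lp.coeFn_smul, Pi.smul_apply,
      Pi.smul_apply, smul_eq_mul, smul_eq_mul]
  have fact : ∀ t : ℕ → ℝ, (∀ n, 0 ≤ t n) → (∑' n, t n) = 1 →
      (t ≠ fun n : ℕ => if n = 0 then (1:ℝ) else 0) →
      Summable t ∧ (∀ n, t n ≤ 1) ∧ ∃ m, m ≠ 0 ∧ 0 < t m := by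
    intro t h0 h1 hne
    have hsum : Summable t := by
      by_contra hc
      rw [tsum_eq_zero_of_not_summable hc] at h1
      norm_num at h1
    have hle : ∀ n, t n ≤ 1 := fun n => h1 ▸ Summable.le_tsum hsum n fun m _ => h0 m
    refine ⟨hsum, hle, ?_⟩
    by_contra hc
    push_neg at hc
    have hz : ∀ m, m ≠ 0 → t m = 0 := fun m hm => le_antisymm (hc m hm) (h0 m)
    apply hne
    funext n
    by_cases hn : n = 0
    · subst hn
      have h2 : ∑' m, t m = t 0 := tsum_eq_single 0 fun m hm' => hz m hm'
      rw [h2] at h1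
      simp [h1]
    · simp [hn, hz n hn]
  have hmem : ∀ ⦃p : lp (fun _ : ℕ => ℝ) 1 × E⦄,
      p ∈ {p : lp (fun _ : ℕ => ℝ) 1 × E | (∀ n, 0 ≤ p.1 n) ∧ (∑' n, p.1 n) = 1 ∧
        Summable (fun n : ℕ => (n : ℝ) * p.1 n) ∧
        (fun n => p.1 n) ≠ (fun n : ℕ => if n = 0 then (1:ℝ) else 0) ∧
        (∑' n : ℕ, (n : ℝ) * p.1 n)⁻¹ • p.2 ∈ C} →
      ∀ ⦃q⦄, q ∈ {p : lp (fun _ : ℕ => ℝ) 1 × E | (∀ n, 0 ≤ p.1 n) ∧ (∑' n, p.1 n) = 1 ∧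
        Summable (fun n : ℕ => (n : ℝ) * p.1 n) ∧
        (fun n => p.1 n) ≠ (fun n : ℕ => if n = 0 then (1:ℝ) else 0) ∧
        (∑' n : ℕ, (n : ℝ) * p.1 n)⁻¹ • p.2 ∈ C} →
      ∀ ⦃a b : ℝ⦄, 0 ≤ a → 0 ≤ b → a + b = 1 →
      a • p + b • q ∈ {p : lp (fun _ : ℕ => ℝ) 1 × E | (∀ n, 0 ≤ p.1 n) ∧ (∑' n, p.1 n) = 1 ∧
        Summable (fun n : ℕ => (n : ℝ) * p.1 n) ∧
        (fun n => p.1 n) ≠ (fun n : ℕ => if n = 0 then (1:ℝ) else 0) ∧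
        (∑' n : ℕ, (n : ℝ) * p.1 n)⁻¹ • p.2 ∈ C} := by
    intro p hp q hq a b ha hb hab
    obtain ⟨h0p, h1p, hsp, hnep, hCp⟩ := hp
    obtain ⟨h0q, h1q, hsq, hneq, hCq⟩ := hq
    obtain ⟨hsump, hlep, m, hm0, hmp⟩ := fact _ h0p h1p hnep
    obtain ⟨hsumq, hleq, m', hm0', hmp'⟩ := fact _ h0q h1q hneq
    have hSp : 0 < ∑' n : ℕ, (n : ℝ) * p.1 n := stmt14_S_pos h0p hsp hm0 hmp
    have hSq : 0 < ∑' n : ℕ, (n : ℝ) * q.1 n := stmt14_S_pos h0q hsq hm0' hmp'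
    set Sp := ∑' n : ℕ, (n : ℝ) * p.1 n with hSpdef
    set Sq := ∑' n : ℕ, (n : ℝ) * q.1 n with hSqdef
    have hSr : (∑' n : ℕ, (n : ℝ) * (a • p + b • q).1 n) = a * Sp + b * Sq := by
      have hfun : (fun n : ℕ => (n : ℝ) * (a • p + b • q).1 n)
          = fun n : ℕ => a * ((n : ℝ) * p.1 n) + b * ((n : ℝ) * q.1 n) := by
        funext n; rw [coord]; ring
      rw [hfun, Summable.tsum_add (hsp.mul_left a) (hsq.mul_left b), tsum_mul_left, tsum_mul_left]
    have hSrpos : 0 < a * Sp + b * Sq := by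
      rcases lt_or_ge 0 a with h | h
      · nlinarith
      · have haz : a = 0 := le_antisymm h ha
        have hb1 : b = 1 := by linarith
        rw [haz, hb1]; simpa using hSq
    refine ⟨fun n => ?_, ?_, ?_, ?_, ?_⟩
    · rw [coord]
      exact add_nonneg (mul_nonneg ha (h0p n)) (mul_nonneg hb (h0q n))
    · calc (∑' n, (a • p + b • q).1 n) = ∑' n, (a * p.1 n + b * q.1 n) :=
          tsum_congr (coord a b p q)
        _ = 1 := by
          rw [Summable.tsum_add (hsump.mul_left a) (hsumq.mul_left b), tsum_mul_left, tsum_mul_left,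
            h1p, h1q, mul_one, mul_one, hab]
    · have hfun : (fun n : ℕ => (n : ℝ) * (a • p + b • q).1 n)
          = fun n : ℕ => a * ((n : ℝ) * p.1 n) + b * ((n : ℝ) * q.1 n) := by
        funext n; rw [coord]; ring
      rw [hfun]
      exact (hsp.mul_left a).add (hsq.mul_left b)
    · intro hcontr
      rcases lt_or_ge 0 a with h | h
      · have hc := congrFun hcontr m
        rw [coord] at hc
        rw [if_neg hm0] at hc
        nlinarith [mul_nonneg hb (h0q m)]
      · have haz : a = 0 := le_antisymm h ha
        have hb1 : b = 1 := by linarith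
        have hc := congrFun hcontr m'
        rw [coord, haz, hb1] at hc
        rw [if_neg hm0'] at hc
        nlinarith [h0p m']
    · rw [hSr]
      have h2 : (a • p + b • q).2 = a • p.2 + b • q.2 := rfl
      have hdecomp : (a * Sp + b * Sq)⁻¹ • (a • p + b • q).2
          = (a * Sp / (a * Sp + b * Sq)) • (Sp⁻¹ • p.2)
            + (b * Sq / (a * Sp + b * Sq)) • (Sq⁻¹ • q.2) := by
        rw [h2, smul_add, smul_smul, smul_smul, smul_smul, smul_smul]
        congr 1
        · congr 1
          field_simp
        · congr 1
          field_simp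
      rw [hdecomp]
      exact hf.1 hCp hCq (div_nonneg (mul_nonneg ha hSp.le) hSrpos.le)
        (div_nonneg (mul_nonneg hb hSq.le) hSrpos.le)
        (by rw [← add_div, div_self hSrpos.ne'])
  refine ⟨hmem, hmem, ?_⟩
  intro p hp q hq a b ha hb hab
  have hrmem := hmem hp hq ha hb hab
  obtain ⟨h0p, h1p, hsp, hnep, hCp⟩ := hp
  obtain ⟨h0q, h1q, hsq, hneq, hCq⟩ := hq
  obtain ⟨h0r, h1r, hsr, hner, hCr⟩ := hrmem
  obtain ⟨hsump, hlep, m, hm0, hmp⟩ := fact _ h0p h1p hnep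
  obtain ⟨hsumq, hleq, m', hm0', hmp'⟩ := fact _ h0q h1q hneq
  obtain ⟨hsumr, hler, m'', hm0'', hmp''⟩ := fact _ h0r h1r hner
  have hSp : 0 < ∑' n : ℕ, (n : ℝ) * p.1 n := stmt14_S_pos h0p hsp hm0 hmp
  have hSq : 0 < ∑' n : ℕ, (n : ℝ) * q.1 n := stmt14_S_pos h0q hsq hm0' hmp'
  set Sp := ∑' n : ℕ, (n : ℝ) * p.1 n with hSpdef
  set Sq := ∑' n : ℕ, (n : ℝ) * q.1 n with hSqdef
  have hSr : (∑' n : ℕ, (n : ℝ) * (a • p + b • q).1 n) = a * Sp + b * Sq := by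
    have hfun : (fun n : ℕ => (n : ℝ) * (a • p + b • q).1 n)
        = fun n : ℕ => a * ((n : ℝ) * p.1 n) + b * ((n : ℝ) * q.1 n) := by
      funext n; rw [coord]; ring
    rw [hfun, Summable.tsum_add (hsp.mul_left a) (hsq.mul_left b), tsum_mul_left, tsum_mul_left]
  have hSrpos : 0 < a * Sp + b * Sq := by
    rcases lt_or_ge 0 a with h | h
    · nlinarith
    · have haz : a = 0 := le_antisymm h ha
      have hb1 : b = 1 := by linarith
      rw [haz, hb1]; simpa using hSq
  have h2 : (a • p + b • q).2 = a • p.2 + b • q.2 := rfl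
  have hdecomp : (a * Sp + b * Sq)⁻¹ • (a • p + b • q).2
      = (a * Sp / (a * Sp + b * Sq)) • (Sp⁻¹ • p.2)
        + (b * Sq / (a * Sp + b * Sq)) • (Sq⁻¹ • q.2) := by
    rw [h2, smul_add, smul_smul, smul_smul, smul_smul, smul_smul]
    congr 1
    · congr 1
      field_simp
    · congr 1
      field_simp
  have hfx := hf.2 hCp hCq (div_nonneg (mul_nonneg ha hSp.le) hSrpos.le)
    (div_nonneg (mul_nonneg hb hSq.le) hSrpos.le)
    (by rw [← add_div, div_self hSrpos.ne'])
  have hpersp : (a * Sp + b * Sq) * f ((a * Sp + b * Sq)⁻¹ • (a • p + b • q).2)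
      ≤ a * Sp * f (Sp⁻¹ • p.2) + b * Sq * f (Sq⁻¹ • q.2) := by
    have h6 : f ((a * Sp + b * Sq)⁻¹ • (a • p + b • q).2)
        ≤ a * Sp / (a * Sp + b * Sq) * f (Sp⁻¹ • p.2)
          + b * Sq / (a * Sp + b * Sq) * f (Sq⁻¹ • q.2) := by
      rw [hdecomp]
      simpa [smul_eq_mul] using hfx
    have h7 := mul_le_mul_of_nonneg_left h6 hSrpos.le
    calc (a * Sp + b * Sq) * f ((a * Sp + b * Sq)⁻¹ • (a • p + b • q).2)
        ≤ (a * Sp + b * Sq) * (a * Sp / (a * Sp + b * Sq) * f (Sp⁻¹ • p.2)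
          + b * Sq / (a * Sp + b * Sq) * f (Sq⁻¹ • q.2)) := h7
      _ = a * Sp * f (Sp⁻¹ • p.2) + b * Sq * f (Sq⁻¹ • q.2) := by
          field_simp
  have hHp : Summable fun n => p.1 n * Real.log (p.1 n) :=
    stmt14_entropy_summable h0p hlep hsp
  have hHq : Summable fun n => q.1 n * Real.log (q.1 n) :=
    stmt14_entropy_summable h0q hleq hsq
  have hHr : Summable fun n => (a • p + b • q).1 n * Real.log ((a • p + b • q).1 n) :=
    stmt14_entropy_summable h0r hler hsr
  have hptw : ∀ n, (a • p + b • q).1 n * Real.log ((a • p + b • q).1 n)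
      ≤ a * (p.1 n * Real.log (p.1 n)) + b * (q.1 n * Real.log (q.1 n)) := by
    intro n
    have hcv := Real.convexOn_mul_log.2 (Set.mem_Ici.2 (h0p n)) (Set.mem_Ici.2 (h0q n)) ha hb hab
    rw [coord]
    simpa [smul_eq_mul] using hcv
  have hent : (∑' n, (a • p + b • q).1 n * Real.log ((a • p + b • q).1 n))
      ≤ a * (∑' n, p.1 n * Real.log (p.1 n)) + b * (∑' n, q.1 n * Real.log (q.1 n)) := by
    calc (∑' n, (a • p + b • q).1 n * Real.log ((a • p + b • q).1 n))
        ≤ ∑' n, (a * (p.1 n * Real.log (p.1 n)) + b * (q.1 n * Real.log (q.1 n))) :=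
          Summable.tsum_le_tsum hptw hHr ((hHp.mul_left a).add (hHq.mul_left b))
      _ = _ := by
          rw [Summable.tsum_add (hHp.mul_left a) (hHq.mul_left b), tsum_mul_left, tsum_mul_left]
  simp only [smul_eq_mul]
  rw [hSr]
  nlinarith [hpersp, hent]
end

section
/- Let (c_n) be a bounded real sequence and λ < 0. Define λ̃(c, λ) = ln(Σ_{n=0}^∞ e^{c_n + n·λ}). Then λ̃(c, λ) equals the maximum over all probability sequences (t_n) with Σ_{n=0}^∞ n·t_n < ∞ of Σ_{n=0}^∞ c_n·t_n + λ·Σ_{n=0}^∞ n·t_n − Σ_{n=0}^∞ t_n ln t_n. -/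
open Real

lemma aux_entropy_bound {t : ℝ} (h0 : 0 ≤ t) (h1 : t ≤ 1) (n : ℕ) :
    |t * Real.log t| ≤ n * t + 2 * Real.exp (-(n : ℝ) / 2) := by
  rcases eq_or_lt_of_le h0 with h | ht
  · simp [← h]; positivity
  have hlog : Real.log t ≤ 0 := Real.log_nonpos h0 h1
  rw [abs_of_nonpos (mul_nonpos_of_nonneg_of_nonpos h0 hlog)]
  rcases le_or_gt (Real.exp (-(n : ℝ))) t with hc | hc
  · have h2 : -(n : ℝ) ≤ Real.log t := (Real.le_log_iff_exp_le ht).2 hc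
    nlinarith [Real.exp_nonneg (-(n : ℝ) / 2)]
  · -- t < exp(-n): -(t log t) ≤ 2 √t ≤ 2 exp(-n/2)
    have h3 : Real.log t⁻¹ ≤ 2 * Real.sqrt t⁻¹ := by
      have := Real.log_le_sub_one_of_pos (x := Real.sqrt t⁻¹) (Real.sqrt_pos.2 (by positivity))
      rw [Real.log_sqrt (by positivity)] at this
      linarith
    have h4 : -(t * Real.log t) ≤ 2 * Real.sqrt t := by
      have ht' : -(t * Real.log t) = t * Real.log t⁻¹ := by
        rw [Real.log_inv]; ring
      rw [ht']
      calc t * Real.log t⁻¹ ≤ t * (2 * Real.sqrt t⁻¹) := by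
            apply mul_le_mul_of_nonneg_left h3 h0
        _ = 2 * (t / Real.sqrt t) := by
            rw [Real.sqrt_inv]; field_simp
        _ = 2 * Real.sqrt t := by rw [Real.div_sqrt]
    have h5 : Real.sqrt t ≤ Real.exp (-(n : ℝ) / 2) := by
      rw [Real.exp_half]
      exact Real.sqrt_le_sqrt hc.le
    nlinarith [mul_nonneg (Nat.cast_nonneg (α := ℝ) n) h0]

lemma aux_summable_exp (c : ℕ → ℝ) (M : ℝ) (hc : ∀ n, |c n| ≤ M)
    (lam : ℝ) (hlam : lam < 0) (k : ℕ) :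
    Summable (fun n : ℕ => (n : ℝ) ^ k * Real.exp (c n + n * lam)) := by
  have hr : ‖Real.exp lam‖ < 1 := by
    rw [Real.norm_eq_abs, abs_of_pos (Real.exp_pos _)]
    exact Real.exp_lt_one_iff.2 hlam
  have := (summable_pow_mul_geometric_of_norm_lt_one k hr).mul_left (Real.exp M)
  apply this.of_nonneg_of_le (fun n => by positivity)
  intro n
  rw [Real.exp_add]
  calc (n : ℝ) ^ k * (Real.exp (c n) * Real.exp (n * lam))
      ≤ (n : ℝ) ^ k * (Real.exp M * Real.exp (n * lam)) := by
        apply mul_le_mul_of_nonneg_left _ (by positivity)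
        apply mul_le_mul_of_nonneg_right _ (Real.exp_nonneg _)
        exact Real.exp_le_exp.2 ((abs_le.1 (hc n)).2)
    _ = Real.exp M * ((n : ℝ) ^ k * Real.exp lam ^ n) := by
        rw [← Real.exp_nat_mul, mul_comm (n : ℝ) lam]; ring

lemma aux_summable_entropy (t : ℕ → ℝ) (h0 : ∀ n, 0 ≤ t n) (hs : HasSum t 1)
    (hm : Summable (fun n : ℕ => (n : ℝ) * t n)) :
    Summable (fun n : ℕ => t n * Real.log (t n)) := by
  have ht1 : ∀ n, t n ≤ 1 := fun n => (le_hasSum hs n fun m _ => h0 m)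
  apply Summable.of_abs
  apply Summable.of_nonneg_of_le (fun n => abs_nonneg _)
    (fun n => aux_entropy_bound (h0 n) (ht1 n) n)
  apply hm.add
  apply Summable.mul_left
  have : Summable (fun n : ℕ => Real.exp (-(1:ℝ)/2) ^ n) :=
    summable_geometric_of_lt_one (Real.exp_nonneg _)
      (Real.exp_lt_one_iff.2 (by norm_num))
  apply this.congr
  intro n
  rw [← Real.exp_nat_mul]
  ring_nf

/-- For a bounded real sequence `c` and `λ < 0`,
`ln(Σ e^{c_n + nλ})` is the maximum, over probability sequences `t` with finite first
moment, of `Σ c_n t_n + λ·Σ n t_n − Σ t_n ln t_n`. -/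
theorem stmt16 (c : ℕ → ℝ) (hc : ∃ M, ∀ n, |c n| ≤ M)
    (lam : ℝ) (hlam : lam < 0) :
    IsGreatest
      {x : ℝ | ∃ t : ℕ → ℝ, (∀ n, 0 ≤ t n) ∧ HasSum t 1 ∧
        Summable (fun n : ℕ => (n : ℝ) * t n) ∧
        x = ∑' n, c n * t n + lam * ∑' n : ℕ, (n : ℝ) * t n
            - ∑' n, t n * Real.log (t n)}
      (Real.log (∑' n : ℕ, Real.exp (c n + n * lam))) := by
  obtain ⟨M, hM⟩ := hc
  have hM0 : 0 ≤ M := le_trans (abs_nonneg _) (hM 0)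
  set a : ℕ → ℝ := fun n => Real.exp (c n + n * lam) with ha
  have hapos : ∀ n, 0 < a n := fun n => by rw [ha]; exact Real.exp_pos _
  have hsa : Summable a := by simpa [ha] using aux_summable_exp c M hM lam hlam 0
  have hsna : Summable (fun n : ℕ => (n : ℝ) * a n) := by
    simpa [ha] using aux_summable_exp c M hM lam hlam 1
  set Z := ∑' n, a n with hZdef
  have hZ : 0 < Z := Summable.tsum_pos hsa (fun n => (hapos n).le) 0 (hapos 0)
  have hloga : ∀ n, Real.log (a n) = c n + n * lam := fun n => by
    rw [ha]; exact Real.log_exp _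
  constructor
  · -- membership : t n = a n / Z achieves the value log Z
    refine ⟨fun n => a n / Z, fun n => (div_pos (hapos n) hZ).le, ?_, ?_, ?_⟩
    · have := hsa.hasSum.div_const Z
      rw [← hZdef, div_self hZ.ne'] at this
      exact this
    · exact (hsna.div_const Z).congr (fun n => by ring)
    · have h2 : Summable (fun n : ℕ => (n : ℝ) * (a n / Z)) :=
        (hsna.div_const Z).congr (fun n => by ring)
      have h1 : Summable (fun n => c n * (a n / Z)) := by
        apply Summable.of_abs
        apply Summable.of_nonneg_of_le (fun n => abs_nonneg _) _
          ((hsa.div_const Z).mul_left M)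
        intro n
        rw [abs_mul, abs_of_nonneg (div_pos (hapos n) hZ).le]
        exact mul_le_mul_of_nonneg_right (hM n) (div_pos (hapos n) hZ).le
      have hts : HasSum (fun n => a n / Z) 1 := by
        have := hsa.hasSum.div_const Z
        rw [← hZdef, div_self hZ.ne'] at this
        exact this
      have heq : (fun n => (a n / Z) * Real.log (a n / Z)) =
          fun n => (c n * (a n / Z) + lam * ((n : ℝ) * (a n / Z)))
            - Real.log Z * (a n / Z) := by
        funext n
        rw [Real.log_div (hapos n).ne' hZ.ne', hloga n]
        ring
      have h3sum : ∑' n, (a n / Z) * Real.log (a n / Z)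
          = (∑' n, c n * (a n / Z)) + lam * (∑' n : ℕ, (n : ℝ) * (a n / Z))
            - Real.log Z := by
        rw [heq, Summable.tsum_sub (h1.add (h2.mul_left lam)) (hts.summable.mul_left (Real.log Z)),
          Summable.tsum_add h1 (h2.mul_left lam), tsum_mul_left, tsum_mul_left, hts.tsum_eq, mul_one]
      rw [h3sum]; ring
  · -- upper bound
    rintro x ⟨t, h0, hts, hm, rfl⟩
    have ht1 : ∀ n, t n ≤ 1 := fun n => le_hasSum hts n fun m _ => h0 m
    have h1 : Summable (fun n => c n * t n) := by
      apply Summable.of_abs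
      apply Summable.of_nonneg_of_le (fun n => abs_nonneg _) _ (hts.summable.mul_left M)
      intro n
      rw [abs_mul, abs_of_nonneg (h0 n)]
      exact mul_le_mul_of_nonneg_right (hM n) (h0 n)
    have h3 : Summable (fun n => t n * Real.log (t n)) := aux_summable_entropy t h0 hts hm
    have key : ∀ n, (c n * t n + lam * ((n : ℝ) * t n) - t n * Real.log (t n))
        - Real.log Z * t n ≤ a n / Z - t n := by
      intro n
      rcases eq_or_lt_of_le (h0 n) with h | h
      · simp [← h]
        exact (div_pos (hapos n) hZ).le
      · have hlog := Real.log_le_sub_one_of_pos (x := a n / (Z * t n))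
          (div_pos (hapos n) (mul_pos hZ h))
        have hexpand : Real.log (a n / (Z * t n)) =
            (c n + n * lam) - Real.log Z - Real.log (t n) := by
          rw [Real.log_div (hapos n).ne' (mul_pos hZ h).ne',
            Real.log_mul hZ.ne' h.ne', hloga n]
          ring
        have h5 := mul_le_mul_of_nonneg_left hlog h.le
        rw [hexpand] at h5
        have hr : t n * (a n / (Z * t n) - 1) = a n / Z - t n := by
          field_simp
        calc (c n * t n + lam * ((n : ℝ) * t n) - t n * Real.log (t n))
              - Real.log Z * t n
            = t n * ((c n + n * lam) - Real.log Z - Real.log (t n)) := by ring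
          _ ≤ t n * (a n / (Z * t n) - 1) := h5
          _ = a n / Z - t n := hr
    have hsumL : Summable (fun n => (c n * t n + lam * ((n : ℝ) * t n)
        - t n * Real.log (t n)) - Real.log Z * t n) :=
      (((h1.add (hm.mul_left lam)).sub h3).sub (hts.summable.mul_left (Real.log Z)))
    have hsumR : Summable (fun n => a n / Z - t n) := (hsa.div_const Z).sub hts.summable
    have hle := Summable.tsum_le_tsum key hsumL hsumR
    have hR : ∑' n, (a n / Z - t n) = 0 := by
      rw [Summable.tsum_sub (hsa.div_const Z) hts.summable, tsum_div_const, hts.tsum_eq,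
        ← hZdef, div_self hZ.ne']
      ring
    have hL : ∑' n, ((c n * t n + lam * ((n : ℝ) * t n) - t n * Real.log (t n))
        - Real.log Z * t n)
        = (∑' n, c n * t n) + lam * (∑' n : ℕ, (n : ℝ) * t n)
          - (∑' n, t n * Real.log (t n)) - Real.log Z := by
      rw [Summable.tsum_sub ((h1.add (hm.mul_left lam)).sub h3) (hts.summable.mul_left (Real.log Z)),
        Summable.tsum_sub (h1.add (hm.mul_left lam)) h3, Summable.tsum_add h1 (hm.mul_left lam),
        tsum_mul_left, tsum_mul_left, hts.tsum_eq, mul_one]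
    rw [hL, hR] at hle
    linarith
end
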